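/- Let w be an element of the extended affine symmetric group with banner shape T ∈ RSYT(λ): explicitly, define w_{T,N} by placing, on the positions in row T_i of T, the consecutive values Nn(l−i)+L_i+1, …, Nn(l−i)+L_{i−1} in increasing order, where l = l(λ) and L_i = λ_{i+1}+⋯+λ_l. Then for N ≥ 1 the Greene–Kleitman partition of the Shi poset of w_{T,N} equals λ; in particular w_{T,N} lies in the two-sided cell indexed by λ. -/

import Mathlib

/-- The Shi order associated to an extended affine permutation `w`:
`i <_P j` iff (`i > j` and `w i < w j`) or `w j > w i + n`. -/
def ShiLt (n : ℕ) (w : ℤ → ℤ) (i j : ℤ) : Prop :=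
  (i > j ∧ w i < w j) ∨ w j > w i + (n : ℤ)

section Aux

lemma aux_anti (l : ℕ) (lam : ℕ → ℕ)
    (hdec : ∀ i : ℕ, 1 ≤ i → i < l → lam (i + 1) ≤ lam i)
    (hzero : ∀ i : ℕ, l < i → lam i = 0) :
    ∀ b a : ℕ, 1 ≤ a → a ≤ b → lam b ≤ lam a := by
  intro b
  induction b with
  | zero => intro a h1 h2; omega
  | succ b ih =>
    intro a h1 h2
    rcases Nat.eq_or_lt_of_le h2 with h | h
    · rw [h]
    · have ha : a ≤ b := by omega
      have hstep : lam (b + 1) ≤ lam b := by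
        by_cases hb : b + 1 ≤ l
        · exact hdec b (by omega) (by omega)
        · rw [hzero (b + 1) (by omega)]; exact Nat.zero_le _
      exact hstep.trans (ih a h1 ha)

lemma aux_sum (lam : ℕ → ℕ)
    (anti : ∀ a b : ℕ, 1 ≤ a → a ≤ b → lam b ≤ lam a) :
    ∀ S : Finset ℕ, (∀ s ∈ S, 1 ≤ s) →
      ∑ s ∈ S, lam s ≤ ∑ i ∈ Finset.Icc 1 S.card, lam i := by
  intro S
  induction S using Finset.strongInduction with
  | _ S ih =>
    intro hS
    rcases S.eq_empty_or_nonempty with rfl | hne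
    · simp
    · have hM : S.max' hne ∈ S := S.max'_mem hne
      set M := S.max' hne with hMdef
      have hsub : S.erase M ⊂ S := Finset.erase_ssubset hM
      have hcard : (S.erase M).card = S.card - 1 := Finset.card_erase_of_mem hM
      have hpos : 1 ≤ S.card := hne.card_pos
      have hMc : S.card ≤ M := by
        have hsub2 : S ⊆ Finset.Icc 1 M :=
          fun s hs => Finset.mem_Icc.2 ⟨hS s hs, S.le_max' s hs⟩
        calc S.card ≤ (Finset.Icc 1 M).card := Finset.card_le_card hsub2
          _ = M := by rw [Nat.card_Icc]; omega
      have h1 : ∑ s ∈ S, lam s = lam M + ∑ s ∈ S.erase M, lam s :=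
        (Finset.add_sum_erase S lam hM).symm
      have h2 : ∑ s ∈ S.erase M, lam s ≤ ∑ i ∈ Finset.Icc 1 (S.card - 1), lam i := by
        rw [← hcard]
        exact ih _ hsub (fun s hs => hS s (Finset.mem_of_mem_erase hs))
      have h3 : lam M ≤ lam S.card := anti S.card M hpos hMc
      have h4 : ∑ i ∈ Finset.Icc 1 S.card, lam i
          = ∑ i ∈ Finset.Icc 1 (S.card - 1), lam i + lam S.card := by
        have hc : S.card = (S.card - 1) + 1 := by omega
        conv_lhs => rw [hc, Finset.sum_Icc_succ_top (Nat.le_add_left _ _)]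
        rw [← hc]
      omega

lemma aux_reindex (lam : ℕ → ℕ) (k : ℕ) :
    ∑ i ∈ Finset.Icc 1 k, lam i = ∑ i ∈ Finset.range k, lam (i + 1) := by
  induction k with
  | zero => simp
  | succ k ih => rw [Finset.sum_Icc_succ_top (by omega), Finset.sum_range_succ, ih]

end Aux

/-- For the element `w = w_{T,N}` (`N ≥ 1`) with banner shape `T ∈ RSYT(λ)`
(rows encoded by `r` = row index and `j` = position in row, with
`w x = N n (l − r x) + L_{r x} + j x` on `[1,n]` where `L_i = λ_{i+1} + ⋯ + λ_l`),
the Greene–Kleitman partition of its Shi poset equals `λ`: for every `k`, the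
maximal cardinality of a union of `k` antichains is `λ_1 + ⋯ + λ_k`.
In particular `w_{T,N}` lies in the two-sided cell indexed by `λ`. -/
theorem stmt13 (n l N : ℕ) (hn : 0 < n) (hl : 0 < l) (hN : 1 ≤ N)
    (lam : ℕ → ℕ)
    (hpos : ∀ i : ℕ, 1 ≤ i → i ≤ l → 0 < lam i)
    (hdec : ∀ i : ℕ, 1 ≤ i → i < l → lam (i + 1) ≤ lam i)
    (hzero : ∀ i : ℕ, l < i → lam i = 0)
    (hsum : ∑ i ∈ Finset.Icc 1 l, lam i = n)
    (r : ℤ → ℕ) (j : ℤ → ℕ)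
    (hrj : ∀ x : ℤ, 1 ≤ x → x ≤ n →
      1 ≤ r x ∧ r x ≤ l ∧ 1 ≤ j x ∧ j x ≤ lam (r x))
    (hinj : ∀ x y : ℤ, 1 ≤ x → x ≤ n → 1 ≤ y → y ≤ n →
      r x = r y → j x = j y → x = y)
    (hsurj : ∀ i jj : ℕ, 1 ≤ i → i ≤ l → 1 ≤ jj → jj ≤ lam i →
      ∃ x : ℤ, 1 ≤ x ∧ x ≤ n ∧ r x = i ∧ j x = jj)
    (hrow : ∀ x y : ℤ, 1 ≤ x → x ≤ n → 1 ≤ y → y ≤ n →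
      r x = r y → x < y → j x < j y)
    (w : ℤ → ℤ)
    (hw : ∀ x : ℤ, 1 ≤ x → x ≤ n →
      w x = ((N * n * (l - r x) : ℕ) : ℤ) +
        ((∑ m ∈ Finset.Icc (r x + 1) l, lam m : ℕ) : ℤ) + (j x : ℤ)) :
    ∀ k : ℕ,
      IsGreatest
        {m : ℕ | ∃ A : ℕ → Finset ℤ,
          (∀ i : ℕ, i < k → A i ⊆ Finset.Icc (1 : ℤ) (n : ℤ) ∧
            ∀ x ∈ A i, ∀ y ∈ A i, ¬ ShiLt n w x y) ∧
          ((Finset.range k).biUnion A).card = m}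
        (∑ i ∈ Finset.Icc 1 k, lam i) := by
  classical
  intro k
  -- notation
  set L : ℕ → ℕ := fun i => ∑ m ∈ Finset.Ioc i l, lam m with hLdef
  have hLIcc : ∀ i : ℕ, (∑ m ∈ Finset.Icc (i + 1) l, lam m) = L i := by
    intro i; rw [hLdef]; rw [Finset.Icc_add_one_left_eq_Ioc]
  set Wn : ℤ → ℕ := fun x => N * n * (l - r x) + L (r x) + j x with hWdef
  have hwW : ∀ x : ℤ, 1 ≤ x → x ≤ (n : ℤ) → w x = (Wn x : ℤ) := by
    intro x h1 h2
    rw [hw x h1 h2, hLIcc]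
    push_cast [hWdef]
    ring
  have lam_anti : ∀ a b : ℕ, 1 ≤ a → a ≤ b → lam b ≤ lam a :=
    fun a b h1 h2 => aux_anti l lam hdec hzero b a h1 h2
  have lam_le_n : ∀ i : ℕ, 1 ≤ i → i ≤ l → lam i ≤ n := by
    intro i h1 h2
    calc lam i ≤ ∑ m ∈ Finset.Icc 1 l, lam m :=
          Finset.single_le_sum (fun _ _ => Nat.zero_le _) (Finset.mem_Icc.2 ⟨h1, h2⟩)
      _ = n := hsum
  -- comparability across rows
  have comp : ∀ x y : ℤ, x ∈ Finset.Icc (1 : ℤ) (n : ℤ) → y ∈ Finset.Icc (1 : ℤ) (n : ℤ) →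
      r y < r x → ShiLt n w x y := by
    intro x y hx hy hlt
    obtain ⟨hx1, hx2⟩ := Finset.mem_Icc.1 hx
    obtain ⟨hy1, hy2⟩ := Finset.mem_Icc.1 hy
    obtain ⟨hrx1, hrx2, hjx1, hjx2⟩ := hrj x hx1 hx2
    obtain ⟨hry1, hry2, hjy1, hjy2⟩ := hrj y hy1 hy2
    right
    rw [hwW x hx1 hx2, hwW y hy1 hy2]
    have key : Wn x + n < Wn y := by
      set a := r y
      set b := r x
      have e1 : l - a = (l - b) + (b - a) := by omega
      have e2 : n ≤ N * n * (b - a) := by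
        calc n = 1 * n * 1 := by ring
          _ ≤ N * n * (b - a) := Nat.mul_le_mul (Nat.mul_le_mul hN le_rfl) (by omega)
      have e3 : L b + lam b ≤ L a := by
        have hsplit : (∑ m ∈ Finset.Ioc a b, lam m) + ∑ m ∈ Finset.Ioc b l, lam m
            = ∑ m ∈ Finset.Ioc a l, lam m :=
          Finset.sum_Ioc_consecutive lam (le_of_lt hlt) hrx2
        have hb : lam b ≤ ∑ m ∈ Finset.Ioc a b, lam m :=
          Finset.single_le_sum (fun _ _ => Nat.zero_le _)
            (Finset.mem_Ioc.2 ⟨hlt, le_rfl⟩)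
        simp only [hLdef]
        omega
      have eW : Wn x = N * n * (l - b) + L b + j x := rfl
      have eW2 : Wn y = N * n * (l - a) + L a + j y := rfl
      have emul : N * n * (l - a) = N * n * (l - b) + N * n * (b - a) := by
        rw [e1, Nat.mul_add]
      omega
    have : (Wn x : ℤ) + n < (Wn y : ℤ) := by exact_mod_cast key
    linarith
  -- incomparability within a row
  have incomp : ∀ x y : ℤ, x ∈ Finset.Icc (1 : ℤ) (n : ℤ) → y ∈ Finset.Icc (1 : ℤ) (n : ℤ) →
      r x = r y → ¬ ShiLt n w x y := by
    intro x y hx hy hr hS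
    obtain ⟨hx1, hx2⟩ := Finset.mem_Icc.1 hx
    obtain ⟨hy1, hy2⟩ := Finset.mem_Icc.1 hy
    obtain ⟨hrx1, hrx2, hjx1, hjx2⟩ := hrj x hx1 hx2
    obtain ⟨hry1, hry2, hjy1, hjy2⟩ := hrj y hy1 hy2
    have hWx : Wn x = N * n * (l - r x) + L (r x) + j x := rfl
    have hWy : Wn y = N * n * (l - r x) + L (r x) + j y := by
      simp [hWdef, hr]
    rcases hS with ⟨hgt, hwlt⟩ | hfar
    · have hj : j y < j x := hrow y x hy1 hy2 hx1 hx2 hr.symm hgt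
      rw [hwW x hx1 hx2, hwW y hy1 hy2] at hwlt
      have : Wn x < Wn y := by exact_mod_cast hwlt
      omega
    · rw [hwW x hx1 hx2, hwW y hy1 hy2] at hfar
      have hfar' : Wn x + n < Wn y := by exact_mod_cast hfar
      have hjn : j y ≤ n := le_trans hjy2 (lam_le_n _ hry1 hry2)
      omega
  -- the rows as finsets
  set R : ℕ → Finset ℤ :=
    fun i => (Finset.Icc (1 : ℤ) (n : ℤ)).filter (fun x => r x = i) with hRdef
  have hRmem : ∀ i (x : ℤ), x ∈ R i ↔ (x ∈ Finset.Icc (1 : ℤ) (n : ℤ) ∧ r x = i) := by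
    intro i x; simp [hRdef]
  have cardR : ∀ i : ℕ, 1 ≤ i → (R i).card = lam i := by
    intro i hi
    by_cases hil : i ≤ l
    · have : (R i).card = (Finset.Icc 1 (lam i)).card := by
        apply Finset.card_bij (fun x _ => j x)
        · intro x hx
          obtain ⟨hxI, hxr⟩ := (hRmem i x).1 hx
          obtain ⟨h1, h2⟩ := Finset.mem_Icc.1 hxI
          obtain ⟨_, _, hj1, hj2⟩ := hrj x h1 h2
          exact Finset.mem_Icc.2 ⟨hj1, by rwa [← hxr]⟩
        · intro x hx y hy hxy
          obtain ⟨hxI, hxr⟩ := (hRmem i x).1 hx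
          obtain ⟨hyI, hyr⟩ := (hRmem i y).1 hy
          obtain ⟨h1, h2⟩ := Finset.mem_Icc.1 hxI
          obtain ⟨h3, h4⟩ := Finset.mem_Icc.1 hyI
          exact hinj x y h1 h2 h3 h4 (hxr.trans hyr.symm) hxy
        · intro b hb
          obtain ⟨hb1, hb2⟩ := Finset.mem_Icc.1 hb
          obtain ⟨x, h1, h2, h3, h4⟩ := hsurj i b hi hil hb1 hb2
          exact ⟨x, (hRmem i x).2 ⟨Finset.mem_Icc.2 ⟨h1, h2⟩, h3⟩, h4⟩
      rw [this, Nat.card_Icc]; omega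
    · have hRe : R i = ∅ := by
        apply Finset.eq_empty_of_forall_notMem
        intro x hx
        obtain ⟨hxI, hxr⟩ := (hRmem i x).1 hx
        obtain ⟨h1, h2⟩ := Finset.mem_Icc.1 hxI
        obtain ⟨_, hr2, _, _⟩ := hrj x h1 h2
        omega
      rw [hRe, hzero i (by omega)]; simp
  have Rdisj : ∀ a b : ℕ, a ≠ b → Disjoint (R a) (R b) := by
    intro a b hab
    rw [Finset.disjoint_left]
    intro x hxa hxb
    obtain ⟨_, h1⟩ := (hRmem a x).1 hxa
    obtain ⟨_, h2⟩ := (hRmem b x).1 hxb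
    exact hab (h1 ▸ h2 ▸ rfl)
  constructor
  · -- membership: the union of the first k rows
    refine ⟨fun i => R (i + 1), ?_, ?_⟩
    · intro i hi
      refine ⟨Finset.filter_subset _ _, ?_⟩
      intro x hx y hy
      obtain ⟨hxI, hxr⟩ := (hRmem _ x).1 hx
      obtain ⟨hyI, hyr⟩ := (hRmem _ y).1 hy
      exact incomp x y hxI hyI (hxr.trans hyr.symm)
    · rw [Finset.card_biUnion (fun a _ b _ hab => Rdisj _ _ (by omega))]
      rw [aux_reindex lam k]
      exact Finset.sum_congr rfl (fun i _ => cardR (i + 1) (by omega))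
  · -- upper bound
    rintro m ⟨A, hA, hcard⟩
    subst hcard
    -- choose a row for each nonempty antichain
    have hchoice : ∀ i : ℕ, ∃ ci : ℕ, i < k → (A i).Nonempty →
        (∀ x ∈ A i, r x = ci) ∧ 1 ≤ ci ∧ ci ≤ l := by
      intro i
      by_cases hi : i < k ∧ (A i).Nonempty
      · obtain ⟨hik, x0, hx0⟩ := hi
        obtain ⟨hAsub, hAanti⟩ := hA i hik
        have hx0I := hAsub hx0
        obtain ⟨h01, h02⟩ := Finset.mem_Icc.1 hx0I
        obtain ⟨hr01, hr02, _, _⟩ := hrj x0 h01 h02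
        refine ⟨r x0, fun _ _ => ⟨?_, hr01, hr02⟩⟩
        intro x hx
        have hxI := hAsub hx
        rcases lt_trichotomy (r x) (r x0) with h | h | h
        · exact absurd (comp x0 x hx0I hxI h) (hAanti x0 hx0 x hx)
        · exact h
        · exact absurd (comp x x0 hxI hx0I h) (hAanti x hx x0 hx0)
      · exact ⟨0, fun h1 h2 => absurd ⟨h1, h2⟩ hi⟩
    choose c hc using hchoice
    set S : Finset ℕ :=
      ((Finset.range k).filter (fun i => (A i).Nonempty)).image c with hSdef
    have hsubU : (Finset.range k).biUnion A ⊆ S.biUnion R := by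
      intro x hx
      obtain ⟨i, hik, hxA⟩ := Finset.mem_biUnion.1 hx
      have hik' : i < k := Finset.mem_range.1 hik
      have hne : (A i).Nonempty := ⟨x, hxA⟩
      obtain ⟨hrc, hc1, hc2⟩ := hc i hik' hne
      refine Finset.mem_biUnion.2 ⟨c i, ?_, ?_⟩
      · exact Finset.mem_image.2 ⟨i, Finset.mem_filter.2 ⟨hik, hne⟩, rfl⟩
      · exact (hRmem _ x).2 ⟨(hA i hik').1 hxA, hrc x hxA⟩
    have hS1 : ∀ s ∈ S, 1 ≤ s := by
      intro s hs
      obtain ⟨i, hi, rfl⟩ := Finset.mem_image.1 hs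
      obtain ⟨hik, hne⟩ := Finset.mem_filter.1 hi
      exact (hc i (Finset.mem_range.1 hik) hne).2.1
    have hScard : S.card ≤ k := by
      calc S.card ≤ ((Finset.range k).filter (fun i => (A i).Nonempty)).card :=
            Finset.card_image_le
        _ ≤ (Finset.range k).card := Finset.card_filter_le _ _
        _ = k := Finset.card_range k
    calc ((Finset.range k).biUnion A).card
        ≤ (S.biUnion R).card := Finset.card_le_card hsubU
      _ ≤ ∑ s ∈ S, (R s).card := Finset.card_biUnion_le
      _ = ∑ s ∈ S, lam s := Finset.sum_congr rfl (fun s hs => cardR s (hS1 s hs))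
      _ ≤ ∑ i ∈ Finset.Icc 1 S.card, lam i := aux_sum lam lam_anti S hS1
      _ ≤ ∑ i ∈ Finset.Icc 1 k, lam i :=
          Finset.sum_le_sum_of_subset (Finset.Icc_subset_Icc_right hScard)
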